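/- Let (a_n) be an arithmetic sequence and (e_n) an arithmetic-type sequence associated with (a_n). If there exists x ∈ t_{(e_n)}(𝕋) such that supp(x) is infinite, then t_{(e_n)}(𝕋) has cardinality 𝔠, the cardinality of the continuum. -/

import Mathlib

open Filter Topology

noncomputable section

/-- The circle group `𝕋 = ℝ/ℤ`. -/
abbrev Circle1 : Type := AddCircle (1 : ℝ)

/-- An arithmetic sequence `(a_n)_{n ≥ 1}`, with the convention `a 0 = 1`:
a strictly increasing sequence of positive integers with `1 < a 1` and `a n ∣ a (n+1)`. -/
def IsArithSeq (a : ℕ → ℕ) : Prop :=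
  a 0 = 1 ∧ StrictMono a ∧ ∀ n, a n ∣ a (n + 1)

/-- The ratio sequence: `q n = a n / a (n-1)` (so `q 1 = a 1`). -/
def ratioSeq (a : ℕ → ℕ) (n : ℕ) : ℕ := a n / a (n - 1)

/-- The subgroup of `𝕋` characterized by a sequence of integers `(u n)`. -/
def charSub (u : ℕ → ℕ) : Set Circle1 :=
  {x : Circle1 | Tendsto (fun n => (u n) • x) atTop (nhds 0)}

/-- The set `{r·a_{k-1} : k ≥ 1, 1 ≤ r ≤ q_k - 1}` whose increasing enumeration is `(d_n)`. -/
def DSet (a : ℕ → ℕ) : Set ℕ :=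
  {m | ∃ k, 1 ≤ k ∧ ∃ r, 1 ≤ r ∧ r ≤ ratioSeq a k - 1 ∧ m = r * a (k - 1)}

/-- `(d_n)` is the strictly increasing enumeration of `DSet a`. -/
def IsDSeq (a d : ℕ → ℕ) : Prop := StrictMono d ∧ Set.range d = DSet a

/-- An arithmetic-type sequence associated with the arithmetic sequence `(a_n)`:
a strictly increasing sequence of positive integers whose set of values contains all the
values `a k` (for `k ≥ 1`) and is contained in `DSet a`. -/
def IsArithTypeSeq (a e : ℕ → ℕ) : Prop :=
  StrictMono e ∧ (∀ k, 1 ≤ k → a k ∈ Set.range e) ∧ Set.range e ⊆ DSet a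

/-- `(c_n)_{n ≥ 1}` is the canonical representation of `x ∈ 𝕋` w.r.t. the arithmetic
sequence `(a_n)`: `0 ≤ c n ≤ q n - 1` for all `n ≥ 1`, `c n < q n - 1` infinitely often,
and `x = Σ_{n ≥ 1} c n / a n` in `𝕋`. -/
def IsCanonicalRep (a c : ℕ → ℕ) (x : Circle1) : Prop :=
  (∀ n, 1 ≤ n → c n ≤ ratioSeq a n - 1) ∧
  {n | 1 ≤ n ∧ c n < ratioSeq a n - 1}.Infinite ∧
  x = ((∑' n : ℕ, (c (n + 1) : ℝ) / (a (n + 1) : ℝ) : ℝ) : Circle1)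

/-- The support of a digit sequence: `supp(x) = {n ≥ 1 : c n ≠ 0}`. -/
def suppOf (c : ℕ → ℕ) : Set ℕ := {n | 1 ≤ n ∧ c n ≠ 0}

namespace CSP

variable {a c : ℕ → ℕ}

section Arith

lemma a_one_le (ha : IsArithSeq a) (n : ℕ) : 1 ≤ a n := ha.1 ▸ ha.2.1.monotone (Nat.zero_le n)

lemma a_pos (ha : IsArithSeq a) (n : ℕ) : 0 < a n := a_one_le ha n

lemma a_cast_pos (ha : IsArithSeq a) (n : ℕ) : (0:ℝ) < (a n : ℝ) := by
  exact_mod_cast a_pos ha n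

lemma a_dvd (ha : IsArithSeq a) {m n : ℕ} (h : m ≤ n) : a m ∣ a n := by
  induction n with
  | zero => simpa [Nat.le_zero.mp h]
  | succ n ih =>
    rcases Nat.lt_or_ge m (n+1) with h'|h'
    · exact (ih (Nat.lt_succ_iff.mp h')).trans (ha.2.2 n)
    · have : m = n + 1 := le_antisymm h h'
      simp [this]

lemma q_mul (ha : IsArithSeq a) (k : ℕ) : ratioSeq a (k+1) * a k = a (k+1) := by
  have : (k+1) - 1 = k := rfl
  rw [ratioSeq, this, Nat.div_mul_cancel (a_dvd ha (Nat.le_succ k))]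

lemma two_le_q (ha : IsArithSeq a) (k : ℕ) : 2 ≤ ratioSeq a (k+1) := by
  by_contra h
  push_neg at h
  have hq := q_mul ha k
  have hlt : a k < a (k+1) := ha.2.1 (by omega)
  have hp := a_pos ha k
  interval_cases h' : ratioSeq a (k+1) <;> omega

lemma two_a_le (ha : IsArithSeq a) (k : ℕ) : 2 * a k ≤ a (k+1) := by
  have h := q_mul ha k
  have h2 := two_le_q ha k
  nlinarith [a_pos ha k]

lemma a_ge_pow (ha : IsArithSeq a) (n : ℕ) : 2 ^ n ≤ a n := by
  induction n with
  | zero => simp [ha.1]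
  | succ n ih =>
    calc 2^(n+1) = 2 * 2^n := by ring
    _ ≤ 2 * a n := by omega
    _ ≤ a (n+1) := two_a_le ha n

lemma one_div_a_le (ha : IsArithSeq a) (n : ℕ) : 1 / (a n : ℝ) ≤ (1/2) ^ n := by
  rw [div_pow, one_pow, div_le_div_iff₀ (a_cast_pos ha n) (by positivity)]
  have := a_ge_pow ha n
  have : (2:ℝ)^n ≤ (a n : ℝ) := by exact_mod_cast this
  nlinarith

lemma one_div_a_tendsto (ha : IsArithSeq a) :
    Tendsto (fun n => 1 / (a n : ℝ)) atTop (nhds 0) := by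
  apply squeeze_zero (fun n => by positivity) (one_div_a_le ha)
  exact tendsto_pow_atTop_nhds_zero_of_lt_one (by norm_num : (0:ℝ) ≤ 1/2) (by norm_num)

end Arith

section Series

/-- digit terms -/
def dseq (a c : ℕ → ℕ) (n : ℕ) : ℝ := (c (n+1) : ℝ) / (a (n+1) : ℝ)

/-- tails -/
def tl (a c : ℕ → ℕ) (N : ℕ) : ℝ := ∑' i, dseq a c (i + N)

lemma dseq_nonneg (ha : IsArithSeq a) (n : ℕ) : 0 ≤ dseq a c n := by
  rw [dseq]; positivity

lemma digit_mul_le (ha : IsArithSeq a) (hc : ∀ n, 1 ≤ n → c n ≤ ratioSeq a n - 1) (n : ℕ) :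
    c (n+1) * a n + a n ≤ a (n+1) := by
  have h1 := hc (n+1) (by omega)
  have h2 := q_mul ha n
  have h3 := two_le_q ha n
  have : c (n+1) * a n ≤ (ratioSeq a (n+1) - 1) * a n := Nat.mul_le_mul_right _ h1
  have h4 : (ratioSeq a (n+1) - 1) * a n + a n = a (n+1) := by
    have := a_pos ha n
    nlinarith [Nat.sub_add_cancel (show 1 ≤ ratioSeq a (n+1) by omega)]
  omega

lemma dseq_le_tel (ha : IsArithSeq a) (hc : ∀ n, 1 ≤ n → c n ≤ ratioSeq a n - 1) (n : ℕ) :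
    dseq a c n ≤ 1 / (a n : ℝ) - 1 / (a (n+1) : ℝ) := by
  have hm := digit_mul_le ha hc n
  have hm' : (c (n+1) : ℝ) * (a n : ℝ) + (a n : ℝ) ≤ (a (n+1) : ℝ) := by exact_mod_cast hm
  have h0 := a_cast_pos ha n
  have h1 := a_cast_pos ha (n+1)
  have hr : 1/(a n:ℝ) - 1/(a (n+1):ℝ) = ((a (n+1):ℝ) - a n)/((a n:ℝ) * (a (n+1):ℝ)) := by
    field_simp
  rw [dseq, hr, div_le_div_iff₀ h1 (by positivity)]
  nlinarith [mul_le_mul_of_nonneg_right (show (c (n+1):ℝ)*(a n:ℝ) ≤ (a (n+1):ℝ) - a n by linarith) h1.le]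

lemma dseq_le_tel' (ha : IsArithSeq a) (hc : ∀ n, 1 ≤ n → c n ≤ ratioSeq a n - 1) {n : ℕ}
    (hn : c (n+1) < ratioSeq a (n+1) - 1) :
    dseq a c n ≤ 1 / (a n : ℝ) - 1 / (a (n+1) : ℝ) - 1 / (a (n+1) : ℝ) := by
  have h2 := q_mul ha n
  have h3 := two_le_q ha n
  have hp := a_pos ha n
  have hm : c (n+1) * a n + a n + a n ≤ a (n+1) := by
    have : (c (n+1) + 1) * a n ≤ (ratioSeq a (n+1) - 1) * a n := Nat.mul_le_mul_right _ (by omega)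
    have h4 : (ratioSeq a (n+1) - 1) * a n + a n = a (n+1) := by
      nlinarith [Nat.sub_add_cancel (show 1 ≤ ratioSeq a (n+1) by omega)]
    nlinarith
  have hm' : (c (n+1) : ℝ) * (a n : ℝ) + (a n : ℝ) + (a n : ℝ) ≤ (a (n+1) : ℝ) := by
    exact_mod_cast hm
  have h0 := a_cast_pos ha n
  have h1 := a_cast_pos ha (n+1)
  have hr : 1/(a n:ℝ) - 2/(a (n+1):ℝ) = ((a (n+1):ℝ) - 2*(a n:ℝ))/((a n:ℝ) * (a (n+1):ℝ)) := by
    field_simp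
  have key : dseq a c n ≤ 1/(a n:ℝ) - 2/(a (n+1):ℝ) := by
    rw [dseq, hr, div_le_div_iff₀ h1 (by positivity)]
    nlinarith [mul_le_mul_of_nonneg_right
      (show (c (n+1):ℝ)*(a n:ℝ) ≤ (a (n+1):ℝ) - 2*(a n:ℝ) by linarith) h1.le]
  have : 2/(a (n+1):ℝ) = 1/(a (n+1):ℝ) + 1/(a (n+1):ℝ) := by ring
  linarith

lemma dseq_le_geom (ha : IsArithSeq a) (hc : ∀ n, 1 ≤ n → c n ≤ ratioSeq a n - 1) (n : ℕ) :
    dseq a c n ≤ (1/2:ℝ) ^ n := by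
  have h := dseq_le_tel ha hc n
  have h2 : (0:ℝ) < a (n+1) := a_cast_pos ha (n+1)
  calc dseq a c n ≤ 1 / (a n : ℝ) - 1 / (a (n+1) : ℝ) := h
    _ ≤ 1 / (a n : ℝ) := sub_le_self _ (by positivity)
    _ ≤ (1/2)^n := one_div_a_le ha n

lemma summable_dseq (ha : IsArithSeq a) (hc : ∀ n, 1 ≤ n → c n ≤ ratioSeq a n - 1) :
    Summable (dseq a c) :=
  Summable.of_nonneg_of_le (dseq_nonneg ha) (dseq_le_geom ha hc)
    (summable_geometric_of_lt_one (by norm_num) (by norm_num))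

lemma summable_dseq_shift (ha : IsArithSeq a) (hc : ∀ n, 1 ≤ n → c n ≤ ratioSeq a n - 1) (N : ℕ) :
    Summable (fun i => dseq a c (i + N)) :=
  (summable_nat_add_iff N).2 (summable_dseq ha hc)

lemma tl_head (ha : IsArithSeq a) (hc : ∀ n, 1 ≤ n → c n ≤ ratioSeq a n - 1) (N : ℕ) :
    ∑ i ∈ Finset.range N, dseq a c i + tl a c N = tl a c 0 := by
  rw [tl, tl]
  rw [Summable.sum_add_tsum_nat_add N (summable_dseq ha hc)]
  simp

lemma tl_sub_eq (ha : IsArithSeq a) (hc : ∀ n, 1 ≤ n → c n ≤ ratioSeq a n - 1) {N M : ℕ}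
    (h : N ≤ M) : tl a c N - tl a c M = ∑ i ∈ Finset.Ico N M, dseq a c i := by
  have h1 := tl_head ha hc N
  have h2 := tl_head ha hc M
  rw [Finset.sum_Ico_eq_sub _ h]
  linarith

/-- telescoping value -/
lemma tsum_tel (ha : IsArithSeq a) (N : ℕ) :
    ∑' i : ℕ, (1 / (a (N+i) : ℝ) - 1 / (a (N+i+1) : ℝ)) = 1 / (a N : ℝ) := by
  have hnn : ∀ i : ℕ, 0 ≤ 1 / (a (N+i) : ℝ) - 1 / (a (N+i+1) : ℝ) := by
    intro i
    have h1 := a_cast_pos ha (N+i)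
    have h2 := a_cast_pos ha (N+i+1)
    have : (a (N+i) : ℝ) ≤ (a (N+i+1) : ℝ) := by
      exact_mod_cast (ha.2.1 (Nat.lt_succ_self (N+i))).le
    rw [sub_nonneg]
    exact one_div_le_one_div_of_le h1 this
  have hsum : Summable (fun i : ℕ => 1 / (a (N+i) : ℝ) - 1 / (a (N+i+1) : ℝ)) := by
    apply Summable.of_nonneg_of_le hnn (fun i => ?_)
      ((summable_geometric_of_lt_one (by norm_num : (0:ℝ) ≤ 1/2) (by norm_num)))
    calc 1 / (a (N+i) : ℝ) - 1 / (a (N+i+1) : ℝ) ≤ 1 / (a (N+i) : ℝ) :=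
          sub_le_self _ (by positivity)
      _ ≤ (1/2)^(N+i) := one_div_a_le ha (N+i)
      _ ≤ (1/2)^i := pow_le_pow_of_le_one (by norm_num) (by norm_num) (by omega)
  have h1 : Tendsto (fun n => ∑ i ∈ Finset.range n, (1 / (a (N+i) : ℝ) - 1 / (a (N+i+1) : ℝ)))
      atTop (nhds (∑' i : ℕ, (1 / (a (N+i) : ℝ) - 1 / (a (N+i+1) : ℝ)))) :=
    hsum.hasSum.tendsto_sum_nat
  have h2 : Tendsto (fun n => ∑ i ∈ Finset.range n, (1 / (a (N+i) : ℝ) - 1 / (a (N+i+1) : ℝ)))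
      atTop (nhds (1 / (a N : ℝ))) := by
    have heq : ∀ n, ∑ i ∈ Finset.range n, (1 / (a (N+i) : ℝ) - 1 / (a (N+i+1) : ℝ))
        = 1 / (a N : ℝ) - 1 / (a (N+n) : ℝ) := by
      intro n
      have := Finset.sum_range_sub' (fun i => 1 / (a (N+i) : ℝ)) n
      simpa [add_assoc] using this
    simp_rw [heq]
    have : Tendsto (fun n => 1 / (a (N+n) : ℝ)) atTop (nhds 0) := by
      have := (one_div_a_tendsto ha)
      have := this.comp (tendsto_atTop_atTop.mpr (fun b => ⟨b, fun n hn => by omega⟩) :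
        Tendsto (fun n => N + n) atTop atTop)
      simpa [Function.comp_def] using this
    simpa using tendsto_const_nhds.sub this
  exact tendsto_nhds_unique h1 h2

lemma summable_tel (ha : IsArithSeq a) (N : ℕ) :
    Summable (fun i : ℕ => 1 / (a (N+i) : ℝ) - 1 / (a (N+i+1) : ℝ)) := by
  apply Summable.of_nonneg_of_le ?_ (fun i => ?_)
    ((summable_geometric_of_lt_one (by norm_num : (0:ℝ) ≤ 1/2) (by norm_num)))
  · intro i
    have h1 := a_cast_pos ha (N+i)
    have : (a (N+i) : ℝ) ≤ (a (N+i+1) : ℝ) := by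
      exact_mod_cast (ha.2.1 (Nat.lt_succ_self (N+i))).le
    rw [sub_nonneg]
    exact one_div_le_one_div_of_le h1 this
  · calc 1 / (a (N+i) : ℝ) - 1 / (a (N+i+1) : ℝ) ≤ 1 / (a (N+i) : ℝ) :=
        sub_le_self _ (by positivity)
    _ ≤ (1/2)^(N+i) := one_div_a_le ha (N+i)
    _ ≤ (1/2)^i := pow_le_pow_of_le_one (by norm_num) (by norm_num) (by omega)

end Series

section Bounds

lemma tl_le (ha : IsArithSeq a) (hc : ∀ n, 1 ≤ n → c n ≤ ratioSeq a n - 1) (N : ℕ) :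
    tl a c N ≤ 1 / (a N : ℝ) := by
  rw [tl, ← tsum_tel ha N]
  apply Summable.tsum_le_tsum _ (summable_dseq_shift ha hc N) (summable_tel ha N)
  intro i
  have := dseq_le_tel ha hc (i+N)
  have h : N + i = i + N := by omega
  rw [h]
  exact this

lemma tl_nonneg (ha : IsArithSeq a) (hc : ∀ n, 1 ≤ n → c n ≤ ratioSeq a n - 1) (N : ℕ) :
    0 ≤ tl a c N :=
  tsum_nonneg (fun i => dseq_nonneg ha _)

lemma tl_pos (ha : IsArithSeq a) (hc : ∀ n, 1 ≤ n → c n ≤ ratioSeq a n - 1)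
    (hsupp : (suppOf c).Infinite) (N : ℕ) : 0 < tl a c N := by
  obtain ⟨m, hm, hmN⟩ := hsupp.exists_gt N
  obtain ⟨hm1, hm0⟩ := hm
  -- m ≥ N+1; index i with (i + N) + 1 = m
  have hi : (m - 1 - N) + N + 1 = m := by omega
  have hterm : 0 < dseq a c ((m - 1 - N) + N) := by
    rw [dseq, hi]
    have h1 := a_cast_pos ha m
    have h2 : 0 < (c m : ℝ) := by exact_mod_cast Nat.pos_of_ne_zero hm0
    positivity
  calc 0 < dseq a c ((m - 1 - N) + N) := hterm
    _ ≤ tl a c N :=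
      Summable.le_tsum (summable_dseq_shift ha hc N) _ (fun j _ => dseq_nonneg ha _)

lemma tl_lt (ha : IsArithSeq a) (hc : ∀ n, 1 ≤ n → c n ≤ ratioSeq a n - 1)
    (hio : {n | 1 ≤ n ∧ c n < ratioSeq a n - 1}.Infinite) (N : ℕ) :
    tl a c N < 1 / (a N : ℝ) := by
  obtain ⟨m, hm, hmN⟩ := hio.exists_gt N
  obtain ⟨hm1, hmlt⟩ := hm
  set i0 := m - 1 - N with hi0
  have hi : i0 + N + 1 = m := by omega
  have hgap : (0:ℝ) < 1 / (a m : ℝ) := by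
    have := a_cast_pos ha m; positivity
  have hle : tl a c N ≤ 1 / (a N : ℝ) - 1 / (a m : ℝ) := by
    have hsumtel := summable_tel ha N
    have hsumite : Summable (fun i : ℕ => if i = i0 then 1 / (a m : ℝ) else 0) :=
      summable_of_ne_finset_zero (s := {i0}) (by intro b hb; simp at hb ⊢; tauto)
    have hts : ∑' i : ℕ, ((1 / (a (N+i) : ℝ) - 1 / (a (N+i+1) : ℝ))
        - (if i = i0 then 1 / (a m : ℝ) else 0)) = 1 / (a N : ℝ) - 1 / (a m : ℝ) := by
      rw [Summable.tsum_sub hsumtel hsumite, tsum_tel ha N, (by simpa using tsum_ite_eq i0 (fun _ : ℕ => 1 / (a m : ℝ)) :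
        (∑' b : ℕ, if b = i0 then 1 / (a m : ℝ) else 0) = 1 / (a m : ℝ))]
    rw [tl, ← hts]
    apply Summable.tsum_le_tsum _ (summable_dseq_shift ha hc N) (hsumtel.sub hsumite)
    intro i
    by_cases hcase : i = i0
    · subst hcase
      have hNi : N + i0 = i0 + N := by omega
      rw [if_pos rfl, hNi, hi]
      have key := dseq_le_tel' ha hc (n := i0 + N) (by rw [hi]; exact hmlt)
      rw [hi] at key
      linarith
    · simp only [if_neg hcase]
      have := dseq_le_tel ha hc (i+N)
      have h : N + i = i + N := by omega
      rw [h]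
      simpa using this
  linarith

end Bounds

section UU

/-- nearest integer to `a N * tl N` (which lies in `(0,1)`, so this is 0 or 1) -/
def rnd (a c : ℕ → ℕ) (N : ℕ) : ℤ := round ((a N : ℝ) * tl a c N)

def uu (a c : ℕ → ℕ) (N : ℕ) : ℝ := tl a c N - (rnd a c N : ℝ) / (a N : ℝ)

lemma atl_mem (ha : IsArithSeq a) (hc : ∀ n, 1 ≤ n → c n ≤ ratioSeq a n - 1)
    (hsupp : (suppOf c).Infinite)
    (hio : {n | 1 ≤ n ∧ c n < ratioSeq a n - 1}.Infinite) (N : ℕ) :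
    0 < (a N : ℝ) * tl a c N ∧ (a N : ℝ) * tl a c N < 1 := by
  have h0 := a_cast_pos ha N
  constructor
  · exact mul_pos h0 (tl_pos ha hc hsupp N)
  · have := tl_lt ha hc hio N
    calc (a N : ℝ) * tl a c N < (a N : ℝ) * (1 / (a N : ℝ)) :=
      mul_lt_mul_of_pos_left this h0
    _ = 1 := by field_simp

lemma mul_uu_eq (ha : IsArithSeq a) (N : ℕ) :
    (a N : ℝ) * uu a c N = (a N : ℝ) * tl a c N - (rnd a c N : ℝ) := by
  have h0 := (a_cast_pos ha N).ne'
  rw [uu, mul_sub]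
  congr 1
  field_simp

lemma abs_mul_uu (ha : IsArithSeq a) (N : ℕ) :
    (a N : ℝ) * |uu a c N| = |(a N : ℝ) * tl a c N - (rnd a c N : ℝ)| := by
  rw [← mul_uu_eq ha N, abs_mul, abs_of_pos (a_cast_pos ha N)]

lemma uu_ne_zero (ha : IsArithSeq a) (hc : ∀ n, 1 ≤ n → c n ≤ ratioSeq a n - 1)
    (hsupp : (suppOf c).Infinite)
    (hio : {n | 1 ≤ n ∧ c n < ratioSeq a n - 1}.Infinite) (N : ℕ) :
    uu a c N ≠ 0 := by
  intro h
  obtain ⟨h1, h2⟩ := atl_mem ha hc hsupp hio N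
  have h0 := a_cast_pos ha N
  have : (a N : ℝ) * tl a c N = (rnd a c N : ℝ) := by
    have h' := mul_uu_eq (c := c) ha N
    rw [h, mul_zero] at h'
    linarith
  rw [this] at h1 h2
  have hz1 : (0:ℤ) < rnd a c N := by exact_mod_cast h1
  have hz2 : rnd a c N < 1 := by exact_mod_cast h2
  omega

lemma abs_uu_le (ha : IsArithSeq a) (N : ℕ) :
    |uu a c N| ≤ (a N : ℝ) * |uu a c N| := by
  have h1 : (1:ℝ) ≤ (a N : ℝ) := by exact_mod_cast a_one_le ha N
  nlinarith [abs_nonneg (uu a c N)]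

end UU

section IntShift

lemma exists_int_sum {s : Finset ℕ} {g : ℕ → ℝ} (h : ∀ i ∈ s, ∃ z : ℤ, g i = z) :
    ∃ z : ℤ, ∑ i ∈ s, g i = z := by
  classical
  induction s using Finset.induction with
  | empty => exact ⟨0, by simp⟩
  | @insert b s hb ih =>
    obtain ⟨z1, hz1⟩ := h b (Finset.mem_insert_self b s)
    obtain ⟨z2, hz2⟩ := ih (fun i hi => h i (Finset.mem_insert_of_mem hi))
    exact ⟨z1 + z2, by rw [Finset.sum_insert hb, hz1, hz2]; push_cast; ring⟩

lemma exists_int_dvd_div {d E : ℕ} (hd : d ∣ E) (hdpos : 0 < d) (b : ℤ) :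
    ∃ z : ℤ, (E : ℝ) * ((b : ℝ) / (d : ℝ)) = z := by
  obtain ⟨t, rfl⟩ := hd
  refine ⟨t * b, ?_⟩
  have hdr : (d:ℝ) ≠ 0 := by positivity
  push_cast
  field_simp

lemma exists_int_mul_dseq (ha : IsArithSeq a) {E n : ℕ} (hd : a (n+1) ∣ E) :
    ∃ z : ℤ, (E : ℝ) * dseq a c n = z := by
  obtain ⟨z, hz⟩ := exists_int_dvd_div hd (a_pos ha (n+1)) (c (n+1) : ℤ)
  exact ⟨z, by rw [dseq, ← hz]; push_cast; ring⟩

lemma exists_int_mul_tl_sub (ha : IsArithSeq a) (hc : ∀ n, 1 ≤ n → c n ≤ ratioSeq a n - 1)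
    {E N M : ℕ} (hNM : N ≤ M) (hd : a M ∣ E) :
    ∃ z : ℤ, (E : ℝ) * tl a c N = z + (E : ℝ) * tl a c M := by
  have hsub := tl_sub_eq ha hc hNM
  have h : ∀ i ∈ Finset.Ico N M, ∃ z : ℤ, (E:ℝ) * dseq a c i = z := by
    intro i hi
    rw [Finset.mem_Ico] at hi
    exact exists_int_mul_dseq ha ((a_dvd ha (show i+1 ≤ M by omega)).trans hd)
  obtain ⟨z, hz⟩ := exists_int_sum h
  refine ⟨z, ?_⟩
  have : (E:ℝ) * tl a c N - (E:ℝ) * tl a c M = (E:ℝ) * (∑ i ∈ Finset.Ico N M, dseq a c i) := by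
    rw [← hsub]; ring
  rw [Finset.mul_sum] at this
  linarith [hz ▸ this]

lemma exists_int_mul_uu (ha : IsArithSeq a) (hc : ∀ n, 1 ≤ n → c n ≤ ratioSeq a n - 1)
    {E N M : ℕ} (hNM : N ≤ M) (hd : a M ∣ E) :
    ∃ z : ℤ, (E : ℝ) * uu a c N = z + (E : ℝ) * tl a c M := by
  obtain ⟨z1, hz1⟩ := exists_int_mul_tl_sub ha hc hNM hd
  obtain ⟨z2, hz2⟩ := exists_int_dvd_div ((a_dvd ha hNM).trans hd) (a_pos ha N) (rnd a c N)
  refine ⟨z1 - z2, ?_⟩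
  rw [uu, mul_sub, hz1, hz2]
  push_cast
  ring

end IntShift

section Sel

/-- All hypotheses needed for the construction. -/
structure Good (a c : ℕ → ℕ) : Prop where
  arith : IsArithSeq a
  digit : ∀ n, 1 ≤ n → c n ≤ ratioSeq a n - 1
  io : {n | 1 ≤ n ∧ c n < ratioSeq a n - 1}.Infinite
  supp : (suppOf c).Infinite
  hD : Tendsto (fun N => (a N : ℝ) * |uu a c N|) atTop (nhds 0)

lemma Good.exists_good (h : Good a c) (M : ℕ) {ε : ℝ} (hε : 0 < ε) :
    ∃ N, M < N ∧ (a N : ℝ) * |uu a c N| ≤ ε := by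
  have := h.hD.eventually (eventually_le_nhds hε)
  rw [eventually_atTop] at this
  obtain ⟨N0, hN0⟩ := this
  refine ⟨max N0 (M+1), ?_, hN0 _ (le_max_left _ _)⟩
  have := le_max_right N0 (M+1)
  omega

lemma eps_pos (h : Good a c) (j M : ℕ) :
    (0:ℝ) < min (|uu a c M|/8) ((1/8:ℝ)^(j+2)) :=
  lt_min (div_pos (abs_pos.mpr (uu_ne_zero h.arith h.digit h.supp h.io M)) (by norm_num))
    (by positivity)

lemma eps0_pos : (0:ℝ) < (1/8:ℝ)^(0+1) := by norm_num

/-- the selection sequence -/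
noncomputable def sel (h : Good a c) : ℕ → ℕ
  | 0 => (h.exists_good 0 eps0_pos).choose
  | (j+1) => (h.exists_good (sel h j) (eps_pos h j (sel h j))).choose

lemma sel_zero_spec (h : Good a c) :
    0 < sel h 0 ∧ (a (sel h 0) : ℝ) * |uu a c (sel h 0)| ≤ (1/8:ℝ)^(0+1) :=
  (h.exists_good 0 eps0_pos).choose_spec

lemma sel_succ_spec (h : Good a c) (j : ℕ) :
    sel h j < sel h (j+1) ∧ (a (sel h (j+1)) : ℝ) * |uu a c (sel h (j+1))| ≤
      min (|uu a c (sel h j)|/8) ((1/8:ℝ)^(j+2)) :=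
  (h.exists_good (sel h j) (eps_pos h j (sel h j))).choose_spec

lemma sel_strictMono (h : Good a c) : StrictMono (sel h) :=
  strictMono_nat_of_lt_succ (fun j => (sel_succ_spec h j).1)

lemma D_sel_le (h : Good a c) (j : ℕ) :
    (a (sel h j) : ℝ) * |uu a c (sel h j)| ≤ (1/8:ℝ)^(j+1) := by
  cases j with
  | zero => exact (sel_zero_spec h).2
  | succ j => exact (sel_succ_spec h j).2.trans (min_le_right _ _)

/-- `ww j = |u_{N_j}|` -/
noncomputable def ww (h : Good a c) (j : ℕ) : ℝ := |uu a c (sel h j)|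

lemma ww_pos (h : Good a c) (j : ℕ) : 0 < ww h j :=
  abs_pos.mpr (uu_ne_zero h.arith h.digit h.supp h.io _)

lemma ww_le_D (h : Good a c) (j : ℕ) : ww h j ≤ (a (sel h j) : ℝ) * |uu a c (sel h j)| :=
  abs_uu_le h.arith _

lemma ww_le (h : Good a c) (j : ℕ) : ww h j ≤ (1/8:ℝ)^(j+1) :=
  (ww_le_D h j).trans (D_sel_le h j)

lemma ww_succ (h : Good a c) (j : ℕ) : ww h (j+1) ≤ ww h j / 8 :=
  (ww_le_D h (j+1)).trans (((sel_succ_spec h j).2).trans (min_le_left _ _))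

lemma ww_decay (h : Good a c) (j i : ℕ) : ww h (j+i) ≤ ww h j * (1/8:ℝ)^i := by
  induction i with
  | zero => simp
  | succ i ih =>
    have h1 := ww_succ h (j+i)
    calc ww h (j+i+1) ≤ ww h (j+i) / 8 := h1
      _ ≤ (ww h j * (1/8:ℝ)^i) / 8 := by linarith
      _ = ww h j * (1/8:ℝ)^(i+1) := by ring

end Sel

section Y

open scoped Classical

/-- block values -/
noncomputable def Vb (h : Good a c) (j : ℕ) : ℝ := uu a c (sel h j) - uu a c (sel h (j+1))

lemma abs_Vb_le (h : Good a c) (j : ℕ) : |Vb h j| ≤ ww h j + ww h (j+1) :=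
  (abs_sub _ _).trans (le_refl _)

lemma abs_Vb_le' (h : Good a c) (j : ℕ) : |Vb h j| ≤ (1/4:ℝ) * (1/8:ℝ)^j := by
  have := abs_Vb_le h j
  have h1 := ww_le h j
  have h2 := ww_le h (j+1)
  have : |Vb h j| ≤ (1/8:ℝ)^(j+1) + (1/8:ℝ)^(j+2) := by linarith
  calc |Vb h j| ≤ (1/8:ℝ)^(j+1) + (1/8:ℝ)^(j+2) := this
    _ ≤ (1/4:ℝ) * (1/8:ℝ)^j := by ring_nf; nlinarith [pow_nonneg (by norm_num : (0:ℝ) ≤ 1/8) j]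

lemma abs_Vb_ge (h : Good a c) (j : ℕ) : (7/8:ℝ) * ww h j ≤ |Vb h j| := by
  have h1 := ww_succ h j
  have h2 : ww h j - ww h (j+1) ≤ |Vb h j| := by
    have := abs_sub_abs_le_abs_sub (uu a c (sel h j)) (uu a c (sel h (j+1)))
    simpa [ww, Vb] using this
  linarith

/-- the map into the circle, for `S : Set ℕ` -/
noncomputable def yy (h : Good a c) (S : Set ℕ) : ℝ := ∑' j, if j ∈ S then Vb h j else 0

lemma abs_ite_Vb_le (h : Good a c) (S : Set ℕ) (j : ℕ) :
    |if j ∈ S then Vb h j else 0| ≤ (1/4:ℝ) * (1/8:ℝ)^j := by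
  by_cases hj : j ∈ S
  · simpa [hj] using abs_Vb_le' h j
  · simp only [if_neg hj, abs_zero]
    positivity

lemma abs_tsum_le (f : ℕ → ℝ) (hf : Summable (fun j => |f j|)) :
    |∑' j, f j| ≤ ∑' j, |f j| := by
  have h2 : Summable (fun j => ‖f j‖) := by simpa [Real.norm_eq_abs] using hf
  simpa [Real.norm_eq_abs] using norm_tsum_le_tsum_norm h2

lemma summable_geom8 (C : ℝ) : Summable (fun j : ℕ => C * (1/8:ℝ)^j) :=
  (summable_geometric_of_lt_one (by norm_num) (by norm_num)).mul_left C

lemma summable_abs_ite (h : Good a c) (S : Set ℕ) :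
    Summable (fun j => |if j ∈ S then Vb h j else 0|) :=
  Summable.of_nonneg_of_le (fun j => abs_nonneg _) (abs_ite_Vb_le h S) (summable_geom8 (1/4))

lemma summable_ite_Vb (h : Good a c) (S : Set ℕ) :
    Summable (fun j => if j ∈ S then Vb h j else 0) :=
  (summable_abs_ite h S).of_abs

lemma tsum_geom8_shift (J : ℕ) : ∑' i : ℕ, (1/8:ℝ)^(J+i) = (1/8:ℝ)^J * (8/7) := by
  have : ∀ i : ℕ, (1/8:ℝ)^(J+i) = (1/8:ℝ)^J * (1/8:ℝ)^i := fun i => pow_add _ _ _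
  rw [tsum_congr this, tsum_mul_left, tsum_geometric_of_lt_one (by norm_num) (by norm_num)]
  norm_num

lemma abs_yy_le (h : Good a c) (S : Set ℕ) : |yy h S| ≤ (2/7:ℝ) := by
  rw [yy]
  calc |∑' j, if j ∈ S then Vb h j else 0| ≤ ∑' j, |if j ∈ S then Vb h j else 0| :=
        abs_tsum_le _ (summable_abs_ite h S)
    _ ≤ ∑' j, (1/4:ℝ) * (1/8:ℝ)^j :=
        Summable.tsum_le_tsum (abs_ite_Vb_le h S) (summable_abs_ite h S) (summable_geom8 _)
    _ = (1/4:ℝ) * ((1/8:ℝ)^0 * (8/7)) := by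
        rw [tsum_mul_left]
        congr 1
        simpa using tsum_geom8_shift 0
    _ ≤ 2/7 := by norm_num

end Y

section KeyBound

open scoped Classical

lemma E_lt_a (ha : IsArithSeq a) {E k r : ℕ} (hk : 1 ≤ k) (hr : 1 ≤ r)
    (hrq : r ≤ ratioSeq a k - 1) (hE : E = r * a (k-1)) : E < a k := by
  cases k with
  | zero => omega
  | succ k' =>
    have hq := q_mul ha k'
    have h2 := two_le_q ha k'
    have hp := a_pos ha k'
    have h1 : E ≤ (ratioSeq a (k'+1) - 1) * a k' := by
      rw [hE]; exact Nat.mul_le_mul_right _ hrq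
    have h4 : (ratioSeq a (k'+1) - 1) * a k' + a k' = a (k'+1) := by
      nlinarith [Nat.sub_add_cancel (show 1 ≤ ratioSeq a (k'+1) by omega)]
    omega

set_option maxHeartbeats 1600000 in
lemma key_bound (h : Good a c) (S : Set ℕ) {E k r : ℕ}
    (hk : 1 ≤ k) (hr : 1 ≤ r) (hrq : r ≤ ratioSeq a k - 1) (hE : E = r * a (k-1))
    {j0 : ℕ} (hj0 : sel h j0 < k) :
    ∃ z : ℤ, |(E:ℝ) * yy h S - z| ≤
      |(E:ℝ) * tl a c (k-1) - (round ((E:ℝ) * tl a c (k-1)) : ℤ)| + (1/8:ℝ)^(j0+1) := by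
  have ha := h.arith
  set δ := |(E:ℝ) * tl a c (k-1) - (round ((E:ℝ) * tl a c (k-1)) : ℤ)| with hδ
  have hδ0 : 0 ≤ δ := abs_nonneg _
  have hdvd : a (k-1) ∣ E := hE ▸ dvd_mul_left _ _
  have hElt : E < a k := E_lt_a ha hk hr hrq hE
  have hEre : (E:ℝ) ≤ (a k : ℝ) := by exact_mod_cast hElt.le
  have hE0 : (0:ℝ) ≤ (E:ℝ) := by positivity
  -- the straddle index
  have hex : ∃ j, k ≤ sel h j := ⟨k, (sel_strictMono h).le_apply⟩
  obtain ⟨J, hJ1, hJ2⟩ : ∃ J, k ≤ sel h J ∧ ∀ j, j < J → sel h j < k :=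
    ⟨Nat.find hex, Nat.find_spec hex, fun j hj => by
      have := Nat.find_min hex hj; omega⟩
  have hJgt : j0 < J := by
    by_contra hcon
    push_neg at hcon
    have : sel h J ≤ sel h j0 := (sel_strictMono h).monotone hcon
    omega
  -- E bounded by a (sel h j) for j ≥ J
  have hEle : ∀ j, J ≤ j → (E:ℝ) ≤ (a (sel h j) : ℝ) := by
    intro j hj
    have h1 : k ≤ sel h j := hJ1.trans ((sel_strictMono h).monotone hj)
    have := ha.2.1.monotone h1
    exact hEre.trans (by exact_mod_cast this)
  -- the summand
  set F : ℕ → ℝ := fun j => (E:ℝ) * (if j ∈ S then Vb h j else 0) with hF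
  have hFsum : Summable F := (summable_ite_Vb h S).mul_left _
  have habsF : (fun j => |F j|) = fun j => (E:ℝ) * |if j ∈ S then Vb h j else 0| := by
    funext j
    rw [hF, abs_mul, abs_of_nonneg hE0]
  have hFabs_sum : Summable (fun j => |F j|) := by
    rw [habsF]; exact (summable_abs_ite h S).mul_left _
  have hEyy : (E:ℝ) * yy h S = ∑ j ∈ Finset.range J, F j + ∑' i, F (i + J) := by
    rw [yy, ← tsum_mul_left, ← Summable.sum_add_tsum_nat_add J hFsum]
  -- finite part: per-term integer approximations
  have hterm : ∀ j : ℕ, ∃ z : ℤ, j < J →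
      |F j - z| ≤ (if j + 1 = J then δ + (1/8:ℝ)^(J+1) else 0) := by
    intro j
    by_cases hj : j < J
    swap
    · exact ⟨0, fun hcon => absurd hcon hj⟩
    by_cases hjS : j ∈ S
    swap
    · refine ⟨0, fun _ => ?_⟩
      rw [hF]
      simp only [if_neg hjS, mul_zero, Int.cast_zero, sub_zero, abs_zero]
      split
      · positivity
      · exact le_rfl
    have h1 : sel h j ≤ k - 1 := by have := hJ2 j hj; omega
    obtain ⟨z1, hz1⟩ := exists_int_mul_uu ha h.digit h1 hdvd
    by_cases hlast : j + 1 = J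
    · -- straddling block
      refine ⟨z1 + round ((E:ℝ) * tl a c (k-1)), fun _ => ?_⟩
      have hselJ : k ≤ sel h (j+1) := by rw [hlast]; exact hJ1
      have hVb : F j = (E:ℝ) * uu a c (sel h j) - (E:ℝ) * uu a c (sel h (j+1)) := by
        rw [hF]; simp only [if_pos hjS, Vb]; ring
      have hEuu : |(E:ℝ) * uu a c (sel h (j+1))| ≤ (1/8:ℝ)^(J+1) := by
        rw [abs_mul, abs_of_nonneg hE0]
        have h2 : (E:ℝ) * |uu a c (sel h (j+1))| ≤ (a (sel h (j+1)) : ℝ) * |uu a c (sel h (j+1))| :=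
          mul_le_mul_of_nonneg_right (hEle (j+1) (le_of_eq hlast.symm)) (abs_nonneg _)
        have h3 := D_sel_le h (j+1)
        rw [← hlast]
        exact h2.trans h3
      rw [if_pos hlast]
      have : F j - (z1 + round ((E:ℝ) * tl a c (k-1)) : ℤ) =
          ((E:ℝ) * tl a c (k-1) - (round ((E:ℝ) * tl a c (k-1)) : ℤ))
            - (E:ℝ) * uu a c (sel h (j+1)) := by
        rw [hVb, hz1]; push_cast; ring
      rw [this]
      calc |_ - _| ≤ δ + |(E:ℝ) * uu a c (sel h (j+1))| := by
            rw [hδ]; exact abs_sub _ _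
        _ ≤ δ + (1/8:ℝ)^(J+1) := by linarith
    · -- fully below scale
      have hj1 : j + 1 < J := by omega
      have h2 : sel h (j+1) ≤ k - 1 := by have := hJ2 (j+1) hj1; omega
      obtain ⟨z2, hz2⟩ := exists_int_mul_uu ha h.digit h2 hdvd
      refine ⟨z1 - z2, fun _ => ?_⟩
      have hVb : F j = (E:ℝ) * uu a c (sel h j) - (E:ℝ) * uu a c (sel h (j+1)) := by
        rw [hF]; simp only [if_pos hjS, Vb]; ring
      rw [if_neg hlast]
      have : F j - ((z1 - z2 : ℤ) : ℝ) = 0 := by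
        rw [hVb, hz1, hz2]; push_cast; ring
      rw [this]
      simp
  choose zf hzf using hterm
  set Z : ℤ := ∑ j ∈ Finset.range J, zf j with hZ
  have hfin : |∑ j ∈ Finset.range J, F j - (Z:ℝ)| ≤ δ + (1/8:ℝ)^(J+1) := by
    have hJpos : 1 ≤ J := by omega
    obtain ⟨J', hJ'⟩ : ∃ J', J = J' + 1 := ⟨J - 1, by omega⟩
    have h1 : ∑ j ∈ Finset.range J, F j - (Z:ℝ) =
        ∑ j ∈ Finset.range J, (F j - (zf j : ℝ)) := by
      rw [hZ]; push_cast; rw [Finset.sum_sub_distrib]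
    rw [h1]
    calc |∑ j ∈ Finset.range J, (F j - (zf j : ℝ))|
        ≤ ∑ j ∈ Finset.range J, |F j - (zf j : ℝ)| := Finset.abs_sum_le_sum_abs _ _
      _ ≤ ∑ j ∈ Finset.range J, (if j + 1 = J then δ + (1/8:ℝ)^(J+1) else 0) := by
          apply Finset.sum_le_sum
          intro j hj
          exact hzf j (Finset.mem_range.mp hj)
      _ = δ + (1/8:ℝ)^(J+1) := by
          rw [hJ']
          have : ∀ j, ((j + 1 = J' + 1) = (j = J')) := by
            intro j; apply propext; omega
          simp_rw [this]
          rw [Finset.sum_ite_eq' (Finset.range (J'+1)) J' (fun _ => δ + (1/8:ℝ)^(J'+1+1))]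
          simp [hJ']
  -- infinite part
  have hFj : ∀ j, J ≤ j → |F j| ≤ (1/4:ℝ) * (1/8:ℝ)^j := by
    intro j hj
    have h1 : |F j| ≤ (E:ℝ) * |if j ∈ S then Vb h j else 0| := le_of_eq (congrFun habsF j)
    by_cases hjS : j ∈ S
    swap
    · rw [hF]; simp only [if_neg hjS, mul_zero, abs_zero]; positivity
    rw [hF]
    simp only [if_pos hjS, abs_mul, abs_of_nonneg hE0, Vb]
    have h2 : |uu a c (sel h j) - uu a c (sel h (j+1))| ≤ ww h j + ww h (j+1) := abs_Vb_le h j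
    have h3 : (E:ℝ) * |uu a c (sel h j) - uu a c (sel h (j+1))| ≤
        (E:ℝ) * ww h j + (E:ℝ) * ww h (j+1) := by
      have := mul_le_mul_of_nonneg_left h2 hE0
      linarith
    have h4 : (E:ℝ) * ww h j ≤ (1/8:ℝ)^(j+1) := by
      calc (E:ℝ) * ww h j ≤ (a (sel h j) : ℝ) * ww h j :=
            mul_le_mul_of_nonneg_right (hEle j hj) (abs_nonneg _)
        _ ≤ (1/8:ℝ)^(j+1) := D_sel_le h j
    have h5 : (E:ℝ) * ww h (j+1) ≤ (1/8:ℝ)^(j+2) := by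
      calc (E:ℝ) * ww h (j+1) ≤ (a (sel h (j+1)) : ℝ) * ww h (j+1) :=
            mul_le_mul_of_nonneg_right (hEle (j+1) (by omega)) (abs_nonneg _)
        _ ≤ (1/8:ℝ)^(j+2) := D_sel_le h (j+1)
    have h6 : (1/8:ℝ)^(j+1) + (1/8:ℝ)^(j+2) ≤ (1/4:ℝ) * (1/8:ℝ)^j := by
      have := pow_nonneg (by norm_num : (0:ℝ) ≤ 1/8) j
      ring_nf
      nlinarith
    linarith
  have hinf : |∑' i, F (i + J)| ≤ (2/7:ℝ) * (1/8:ℝ)^J := by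
    have hs1 : Summable (fun i => |F (i + J)|) := (summable_nat_add_iff J).2 hFabs_sum
    have hs2 : Summable (fun i : ℕ => (1/4:ℝ) * (1/8:ℝ)^(i+J)) := by
      apply Summable.of_nonneg_of_le (fun i => by positivity) (fun i => ?_)
        (summable_geom8 (1/4))
      have : (1/8:ℝ)^(i+J) ≤ (1/8:ℝ)^i := pow_le_pow_of_le_one (by norm_num) (by norm_num) (by omega)
      nlinarith
    calc |∑' i, F (i + J)| ≤ ∑' i, |F (i + J)| := abs_tsum_le _ hs1
      _ ≤ ∑' i : ℕ, (1/4:ℝ) * (1/8:ℝ)^(i+J) :=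
          Summable.tsum_le_tsum (fun i => hFj (i+J) (by omega)) hs1 hs2
      _ = (1/4:ℝ) * ((1/8:ℝ)^J * (8/7)) := by
          have : ∀ i : ℕ, (1/4:ℝ) * (1/8:ℝ)^(i+J) = (1/4:ℝ) * (1/8:ℝ)^(J+i) := by
            intro i; rw [Nat.add_comm]
          rw [tsum_congr this, tsum_mul_left, tsum_geom8_shift J]
      _ = (2/7:ℝ) * (1/8:ℝ)^J := by ring
  refine ⟨Z, ?_⟩
  have hcomb : |(E:ℝ) * yy h S - Z| ≤ δ + (1/8:ℝ)^(J+1) + (2/7:ℝ) * (1/8:ℝ)^J := by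
    rw [hEyy]
    have : ∑ j ∈ Finset.range J, F j + ∑' i, F (i + J) - (Z:ℝ) =
        (∑ j ∈ Finset.range J, F j - (Z:ℝ)) + ∑' i, F (i + J) := by ring
    rw [this]
    calc |_| ≤ |∑ j ∈ Finset.range J, F j - (Z:ℝ)| + |∑' i, F (i + J)| := abs_add_le _ _
      _ ≤ δ + (1/8:ℝ)^(J+1) + (2/7:ℝ) * (1/8:ℝ)^J := by linarith
  have hJle : (1/8:ℝ)^J ≤ (1/8:ℝ)^(j0+1) :=
    pow_le_pow_of_le_one (by norm_num) (by norm_num) (by omega)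
  have hpow : (1/8:ℝ)^(J+1) + (2/7:ℝ) * (1/8:ℝ)^J ≤ (1/8:ℝ)^J := by
    have h1 : (1/8:ℝ)^(J+1) = (1/8:ℝ) * (1/8:ℝ)^J := by ring
    have := pow_nonneg (by norm_num : (0:ℝ) ≤ 1/8) J
    nlinarith
  calc |(E:ℝ) * yy h S - Z| ≤ δ + (1/8:ℝ)^(J+1) + (2/7:ℝ) * (1/8:ℝ)^J := hcomb
    _ ≤ δ + (1/8:ℝ)^J := by linarith
    _ ≤ δ + (1/8:ℝ)^(j0+1) := by linarith

end KeyBound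

section Inj

open scoped Classical

lemma yy_inj (h : Good a c) {S S' : Set ℕ} (hne : S ≠ S') : yy h S ≠ yy h S' := by
  have hTex : ∃ j, ¬((j ∈ S) ↔ (j ∈ S')) := by
    by_contra hcon
    push_neg at hcon
    exact hne (Set.ext hcon)
  set j0 := Nat.find hTex with hj0def
  have hj0 : ¬((j0 ∈ S) ↔ (j0 ∈ S')) := Nat.find_spec hTex
  have hmin : ∀ j, j < j0 → ((j ∈ S) ↔ (j ∈ S')) := fun j hj =>
    not_not.mp (Nat.find_min hTex hj)
  set g : ℕ → ℝ := fun j =>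
    (if j ∈ S then Vb h j else 0) - (if j ∈ S' then Vb h j else 0) with hg
  have hgsum : Summable g := (summable_ite_Vb h S).sub (summable_ite_Vb h S')
  have hdiff : yy h S - yy h S' = ∑' j, g j := by
    rw [yy, yy, ← Summable.tsum_sub (summable_ite_Vb h S) (summable_ite_Vb h S')]
  have hgabs : ∀ j, |g j| ≤ |Vb h j| := by
    intro j
    simp only [hg]
    by_cases h1 : j ∈ S <;> by_cases h2 : j ∈ S' <;> simp [h1, h2, abs_nonneg]
  have hg0 : ∀ j, j < j0 → g j = 0 := by
    intro j hj
    simp only [hg]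
    by_cases h1 : j ∈ S
    · rw [if_pos h1, if_pos ((hmin j hj).mp h1), sub_self]
    · rw [if_neg h1, if_neg (fun h2 => h1 ((hmin j hj).mpr h2)), sub_self]
  have hgj0 : |g j0| = |Vb h j0| := by
    simp only [hg]
    by_cases h1 : j0 ∈ S
    · have h2 : j0 ∉ S' := fun h2 => hj0 ⟨fun _ => h2, fun _ => h1⟩
      simp [h1, h2]
    · have h2 : j0 ∈ S' := by
        by_contra h2
        exact hj0 ⟨fun h => absurd h h1, fun h => absurd h h2⟩
      simp [h1, h2, abs_neg]
  -- split the sum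
  have hsplit : ∑' j, g j = ∑ j ∈ Finset.range (j0+1), g j + ∑' i, g (i + (j0+1)) :=
    (Summable.sum_add_tsum_nat_add (j0+1) hgsum).symm
  have hhead : ∑ j ∈ Finset.range (j0+1), g j = g j0 := by
    rw [Finset.sum_range_succ]
    have : ∑ j ∈ Finset.range j0, g j = 0 :=
      Finset.sum_eq_zero (fun j hj => hg0 j (Finset.mem_range.mp hj))
    rw [this, zero_add]
  -- tail bound
  have htail_term : ∀ i : ℕ, |g (i + (j0+1))| ≤ (2 * (ww h j0 / 8)) * (1/8:ℝ)^i := by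
    intro i
    have h1 : |g (i + (j0+1))| ≤ |Vb h (i + (j0+1))| := hgabs _
    have h2 : |Vb h (i + (j0+1))| ≤ ww h (i + (j0+1)) + ww h (i + (j0+1) + 1) :=
      abs_Vb_le h _
    have h3 : ww h (i + (j0+1) + 1) ≤ ww h (i + (j0+1)) := by
      have := ww_succ h (i + (j0+1))
      have := ww_pos h (i + (j0+1))
      linarith
    have h4 : ww h (i + (j0+1)) ≤ ww h (j0+1) * (1/8:ℝ)^i := by
      have := ww_decay h (j0+1) i
      have heq : j0 + 1 + i = i + (j0+1) := by omega
      rw [heq] at this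
      exact this
    have h5 : ww h (j0+1) ≤ ww h j0 / 8 := ww_succ h j0
    have h6 : (0:ℝ) ≤ (1/8:ℝ)^i := by positivity
    nlinarith
  have htail_sum : Summable (fun i => |g (i + (j0+1))|) := by
    apply Summable.of_nonneg_of_le (fun i => abs_nonneg _) htail_term
      (summable_geom8 _)
  have htail : |∑' i, g (i + (j0+1))| ≤ (2/7) * ww h j0 := by
    calc |∑' i, g (i + (j0+1))| ≤ ∑' i, |g (i + (j0+1))| := abs_tsum_le _ htail_sum
      _ ≤ ∑' i : ℕ, (2 * (ww h j0 / 8)) * (1/8:ℝ)^i :=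
          Summable.tsum_le_tsum htail_term htail_sum (summable_geom8 _)
      _ = (2 * (ww h j0 / 8)) * ((1/8:ℝ)^0 * (8/7)) := by
          rw [tsum_mul_left]
          congr 1
          simpa using tsum_geom8_shift 0
      _ = (2/7) * ww h j0 := by ring
  have hVbge : (7/8:ℝ) * ww h j0 ≤ |g j0| := by rw [hgj0]; exact abs_Vb_ge h j0
  have hwpos := ww_pos h j0
  intro hcon
  have : yy h S - yy h S' = 0 := by rw [hcon, sub_self]
  rw [hdiff, hsplit, hhead] at this
  have habs : |g j0| ≤ |∑' i, g (i + (j0+1))| := by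
    have : g j0 = -(∑' i, g (i + (j0+1))) := by linarith
    rw [this, abs_neg]
  have : (7/8:ℝ) * ww h j0 ≤ (2/7) * ww h j0 := le_trans hVbge (habs.trans htail)
  nlinarith

end Inj

section Bridge

lemma abs_round_shift (w : ℝ) (z : ℤ) :
    |(w + (z:ℝ)) - ((round (w + (z:ℝ)) : ℤ) : ℝ)| = |w - ((round w : ℤ) : ℝ)| := by
  rw [round_add_intCast]
  congr 1
  push_cast
  ring

lemma norm_coe_circle (y : ℝ) : ‖(y : Circle1)‖ = |y - ((round y : ℤ) : ℝ)| := by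
  simpa using AddCircle.norm_eq (p := (1:ℝ))

lemma nsmul_coe_circle (n : ℕ) (y : ℝ) :
    n • ((y : ℝ) : Circle1) = (((n : ℝ) * y : ℝ) : Circle1) := by
  rw [← AddCircle.coe_nsmul]
  norm_num

end Bridge

lemma tl_zero : tl a c 0 = ∑' (n : ℕ), (c (n + 1) : ℝ) / (a (n + 1) : ℝ) := by
  rw [tl]
  exact tsum_congr (fun n => by simp [dseq])

end CSP


/-- if `t_{(e_n)}(𝕋)` contains an element with infinite support then
`|t_{(e_n)}(𝕋)| = 𝔠`. -/
theorem card_charSub_continuum_of_infinite_supp (a e : ℕ → ℕ) (ha : IsArithSeq a)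
    (he : IsArithTypeSeq a e)
    (hx : ∃ x ∈ charSub e, ∃ c : ℕ → ℕ, IsCanonicalRep a c x ∧ (suppOf c).Infinite) :
    Cardinal.mk ↥(charSub e) = Cardinal.continuum := by
  classical
  open CSP in
  obtain ⟨x, hxmem, c, ⟨hcd, hio, hxeq⟩, hsupp⟩ := hx
  -- identify x with the real number X = tl a c 0
  have hX : x = ((tl a c 0 : ℝ) : Circle1) := by
    rw [hxeq, CSP.tl_zero]
  have hxnorm : Tendsto (fun n => ‖e n • x‖) atTop (nhds 0) :=
    tendsto_zero_iff_norm_tendsto_zero.mp hxmem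
  -- ‖m • x‖ in terms of tails, for m divisible by a M
  have key_norm : ∀ (m M : ℕ), a M ∣ m →
      ‖m • x‖ = |(m:ℝ) * tl a c M - ((round ((m:ℝ) * tl a c M) : ℤ) : ℝ)| := by
    intro m M hdvd
    obtain ⟨z, hz⟩ := exists_int_mul_tl_sub ha hcd (Nat.zero_le M) hdvd
    rw [hX, nsmul_coe_circle, norm_coe_circle, hz]
    rw [show (z:ℝ) + (m:ℝ) * tl a c M = (m:ℝ) * tl a c M + (z:ℝ) by ring]
    exact abs_round_shift _ z
  -- D-sequence tends to zero
  have hDa : Tendsto (fun N => (a N : ℝ) * |uu a c N|) atTop (nhds 0) := by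
    have heq : ∀ N, (a N : ℝ) * |uu a c N| = ‖(a N) • x‖ := by
      intro N
      rw [key_norm (a N) N dvd_rfl, abs_mul_uu ha N, rnd]
    have hsub : Tendsto (fun N => ‖a (N+1) • x‖) atTop (nhds 0) := by
      choose idx hidx using (fun k => he.2.1 (k+1) (Nat.succ_le_succ (Nat.zero_le k)))
      have hinj : Function.Injective idx := by
        intro k k' hkk
        have : a (k+1) = a (k'+1) := by rw [← hidx k, ← hidx k', hkk]
        have := ha.2.1.injective this
        omega
      have h1 : Tendsto (fun k => ‖e (idx k) • x‖) atTop (nhds 0) :=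
        hxnorm.comp hinj.nat_tendsto_atTop
      have h2 : (fun k => ‖e (idx k) • x‖) = fun k => ‖a (k+1) • x‖ := by
        funext k
        rw [hidx k]
      rwa [h2] at h1
    have := (tendsto_add_atTop_iff_nat (f := fun N => ‖a N • x‖) 1).mp hsub
    simp_rw [heq]
    exact this
  have hGood : Good a c := ⟨ha, hcd, hio, hsupp, hDa⟩
  -- decompose each e n
  have hspec : ∀ n, ∃ k, 1 ≤ k ∧ ∃ r, 1 ≤ r ∧ r ≤ ratioSeq a k - 1 ∧ e n = r * a (k-1) :=
    fun n => he.2.2 ⟨n, rfl⟩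
  choose kk hk1 rr hr1 hrq hEeq using hspec
  have hedvd : ∀ n, a (kk n - 1) ∣ e n := fun n => (hEeq n) ▸ dvd_mul_left _ _
  -- membership of each yy in the characterized subgroup
  have hmemyy : ∀ S : Set ℕ, ((yy hGood S : ℝ) : Circle1) ∈ charSub e := by
    intro S
    show Tendsto _ atTop (nhds 0)
    rw [NormedAddCommGroup.tendsto_nhds_zero]
    intro ε hε
    obtain ⟨j1, hj1⟩ := exists_pow_lt_of_lt_one (half_pos hε) (by norm_num : (1/8:ℝ) < 1)
    have hev1 : ∀ᶠ n in atTop, ‖e n • x‖ < ε/2 :=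
      hxnorm.eventually (eventually_lt_nhds (half_pos hε))
    have hev2 : ∀ᶠ n in atTop, sel hGood j1 < kk n := by
      rw [eventually_atTop]
      refine ⟨a (sel hGood j1) + 1, fun n hn => ?_⟩
      have h1 : a (sel hGood j1) < e n := by
        have := he.1.le_apply (x := n)
        omega
      have h2 : e n < a (kk n) := E_lt_a ha (hk1 n) (hr1 n) (hrq n) (hEeq n)
      have h3 : a (sel hGood j1) < a (kk n) := by omega
      exact ha.2.1.lt_iff_lt.mp h3
    filter_upwards [hev1, hev2] with n hn1 hn2
    obtain ⟨z, hz⟩ := key_bound hGood S (hk1 n) (hr1 n) (hrq n) (hEeq n) hn2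
    have hδ : |(e n : ℝ) * tl a c (kk n - 1) -
        ((round ((e n : ℝ) * tl a c (kk n - 1)) : ℤ) : ℝ)| = ‖e n • x‖ :=
      (key_norm (e n) (kk n - 1) (hedvd n)).symm
    rw [hδ] at hz
    have hnorm_le : ‖e n • ((yy hGood S : ℝ) : Circle1)‖ ≤ |(e n : ℝ) * yy hGood S - (z:ℝ)| := by
      rw [nsmul_coe_circle, norm_coe_circle]
      exact round_le ((e n : ℝ) * yy hGood S) z
    have hpow : (1/8:ℝ)^(j1+1) ≤ (1/8:ℝ)^j1 :=
      pow_le_pow_of_le_one (by norm_num) (by norm_num) (by omega)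
    calc ‖e n • ((yy hGood S : ℝ) : Circle1)‖ ≤ |(e n : ℝ) * yy hGood S - (z:ℝ)| := hnorm_le
      _ ≤ ‖e n • x‖ + (1/8:ℝ)^(j1+1) := hz
      _ < ε/2 + ε/2 := by
          have := hpow.trans_lt hj1
          linarith
      _ = ε := by ring
  -- the injection
  set Φ : Set ℕ → ↥(charSub e) := fun S => ⟨_, hmemyy S⟩ with hΦ
  have hΦinj : Function.Injective Φ := by
    intro S S' hSS
    by_contra hne
    have h1 : ((yy hGood S : ℝ) : Circle1) = ((yy hGood S' : ℝ) : Circle1) :=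
      congrArg Subtype.val hSS
    have h2 : (((yy hGood S - yy hGood S' : ℝ)) : Circle1) = 0 := by
      rw [AddCircle.coe_sub, h1, sub_self]
    obtain ⟨zz, hzz⟩ := (AddCircle.coe_eq_zero_iff (1:ℝ)).mp h2
    have hb1 := abs_yy_le hGood S
    have hb2 := abs_yy_le hGood S'
    have hlt : |yy hGood S - yy hGood S'| < 1 := by
      have := abs_sub (yy hGood S) (yy hGood S')
      linarith
    have hzz' : (zz:ℝ) = yy hGood S - yy hGood S' := by
      rw [← hzz]; simp
    have : |(zz:ℝ)| < 1 := by rw [hzz']; exact hlt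
    have hz0 : zz = 0 := by
      have h4 : |zz| < 1 := by exact_mod_cast this
      exact Int.abs_lt_one_iff.mp h4
    rw [hz0] at hzz'
    simp only [Int.cast_zero] at hzz'
    exact yy_inj hGood hne (sub_eq_zero.mp hzz'.symm)
  -- cardinality computation
  apply le_antisymm
  · calc Cardinal.mk ↥(charSub e) ≤ Cardinal.mk Circle1 := Cardinal.mk_set_le _
      _ ≤ Cardinal.mk ℝ :=
          Cardinal.mk_le_of_surjective (f := fun x : ℝ => (x : Circle1))
            QuotientAddGroup.mk_surjective
      _ = Cardinal.continuum := Cardinal.mk_real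
  · calc Cardinal.continuum = 2 ^ Cardinal.aleph0 := Cardinal.two_power_aleph0.symm
      _ = Cardinal.mk (Set ℕ) := by rw [Cardinal.mk_set, Cardinal.mk_nat]
      _ ≤ Cardinal.mk ↥(charSub e) := Cardinal.mk_le_of_injective hΦinj
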